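/- Let (x^k)_{k ≥ −1} be a cDCA sequence with x⁰ ∈ dom g. Then for every k ≥ 0, E(x^{k+1}, x^k) + (λ/2 − τ)‖x^k − x^{k+1}‖² ≤ E(x^k, x^{k−1}); in particular, since τ = L_f²δ²/(8λ) < λ/2, the sequence (E(x^k, x^{k−1}))_{k ≥ 0} is nonincreasing. -/

import Mathlib

open Set Filter Topology
open scoped InnerProductSpace

noncomputable section

abbrev Euc (n : ℕ) := EuclideanSpace ℝ (Fin n)

/-- The subdifferential of a real-valued function `h` at `u`. -/
def SubdiffR {n : ℕ} (h : Euc n → ℝ) (u : Euc n) : Set (Euc n) :=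
  {ξ | ∀ z, h u + ⟪ξ, z - u⟫_ℝ ≤ h z}

/-- Convexity for extended-real-valued functions. -/
def ConvexEReal {n : ℕ} (g : Euc n → EReal) : Prop :=
  ∀ x y : Euc n, ∀ a b : ℝ, 0 ≤ a → 0 ≤ b → a + b = 1 →
    g (a • x + b • y) ≤ (a : EReal) * g x + (b : EReal) * g y

/-- `g` is proper: nowhere `⊥` and somewhere finite. -/
def ProperE {n : ℕ} (g : Euc n → EReal) : Prop :=
  (∀ x, g x ≠ ⊥) ∧ ∃ x, g x ≠ ⊤

/-- `P` is the proximal mapping of `g`: for every `α > 0` and every `x`, `P α x` is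
the unique minimizer over `ℝⁿ` of `y ↦ g y + (1/(2α)) ‖x - y‖²`. -/
def IsProx {n : ℕ} (g : Euc n → EReal) (P : ℝ → Euc n → Euc n) : Prop :=
  ∀ α : ℝ, 0 < α → ∀ x p, P α x = p ↔
    (∀ y, g p + ((1/(2*α) * ‖x - p‖^2 : ℝ) : EReal) ≤ g y + ((1/(2*α) * ‖x - y‖^2 : ℝ) : EReal))

/-- A cDCA sequence, indexed so that `x 0 = x⁻¹` and `x (k+1) = xᵏ` for `k ≥ 0`:
for every `k ≥ 0` there exist `ηᵏ ∈ ∂h(xᵏ)` and `yᵏ` with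
`x^{k+1} = Prox_{μg}((1-μλ)yᵏ - μ∇f(yᵏ) + μλxᵏ + μηᵏ)` and
`‖x^{k+1} - yᵏ‖ ≤ δ‖x^{k-1} - xᵏ‖`. -/
def IsCDCA {n : ℕ} (f' : Euc n → Euc n) (h : Euc n → ℝ) (P : ℝ → Euc n → Euc n)
    (lam mu δ : ℝ) (x : ℕ → Euc n) : Prop :=
  ∀ k : ℕ, ∃ η ∈ SubdiffR h (x (k+1)), ∃ y,
    x (k+2) = P mu ((1 - mu*lam) • y - mu • f' y + (mu*lam) • x (k+1) + mu • η) ∧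
    ‖x (k+2) - y‖ ≤ δ * ‖x k - x (k+1)‖


set_option maxHeartbeats 4000000

section Aux
variable {E : Type*} [NormedAddCommGroup E] [InnerProductSpace ℝ E] [CompleteSpace E]

lemma cdca_line_hasDerivAt (f : E → ℝ) (f' : E → E) (hf : ∀ z, HasGradientAt f (f' z) z)
    (z v : E) (t : ℝ) :
    HasDerivAt (fun s : ℝ => f (z + s • v)) ⟪f' (z + t • v), v⟫_ℝ t := by
  have hγ : HasDerivAt (fun s : ℝ => z + s • v) v t := by
    simpa using (hasDerivAt_id t).smul_const v |>.const_add z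
  have := (hf (z + t • v)).hasFDerivAt.comp_hasDerivAt t hγ
  simp [InnerProductSpace.toDual_apply_apply] at this
  exact this

lemma cdca_grad_convex (f : E → ℝ) (f' : E → E) (hconv : ConvexOn ℝ Set.univ f)
    (hf : ∀ z, HasGradientAt f (f' z) z) (z w : E) :
    f z + ⟪f' z, w - z⟫_ℝ ≤ f w := by
  set v := w - z with hv
  have hd : HasDerivAt (fun s : ℝ => f (z + s • v)) ⟪f' z, v⟫_ℝ 0 := by
    simpa using cdca_line_hasDerivAt f f' hf z v 0
  have hslope : Tendsto (slope (fun s : ℝ => f (z + s • v)) 0) (𝓝[≠] 0) (𝓝 ⟪f' z, v⟫_ℝ) :=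
    hasDerivAt_iff_tendsto_slope.mp hd
  have hslope' : Tendsto (slope (fun s : ℝ => f (z + s • v)) 0) (𝓝[>] 0) (𝓝 ⟪f' z, v⟫_ℝ) :=
    hslope.mono_left (nhdsWithin_mono 0 (fun x hx => ne_of_gt hx))
  have hle : ∀ᶠ t in 𝓝[>] (0:ℝ), slope (fun s : ℝ => f (z + s • v)) 0 t ≤ f w - f z := by
    filter_upwards [Ioc_mem_nhdsGT_of_mem ⟨le_refl (0:ℝ), zero_lt_one⟩] with t ht
    have h0 : f (z + t • v) ≤ (1 - t) * f z + t * f w := by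
      have := hconv.2 (mem_univ z) (mem_univ w) (by linarith [ht.2] : (0:ℝ) ≤ 1 - t)
        (le_of_lt ht.1) (by ring)
      have hzw : (1 - t) • z + t • w = z + t • v := by rw [hv]; module
      simpa [hzw, smul_eq_mul] using this
    rw [slope_def_field]
    simp only [zero_smul, add_zero, sub_zero]
    rw [div_le_iff₀ ht.1]
    nlinarith [ht.1]
  have := le_of_tendsto hslope' hle
  linarith [this]

lemma cdca_descent (f : E → ℝ) (f' : E → E) (L : ℝ)
    (hf : ∀ z, HasGradientAt f (f' z) z)
    (hlip : ∀ z w, ‖f' z - f' w‖ ≤ L * ‖z - w‖) (z w : E) :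
    f w ≤ f z + ⟪f' z, w - z⟫_ℝ + L / 2 * ‖w - z‖ ^ 2 := by
  set v := w - z with hv
  set φ : ℝ → ℝ := fun t => f (z + t • v) - t * ⟪f' z, v⟫_ℝ - L / 2 * t ^ 2 * ‖v‖ ^ 2 with hφ
  have hd : ∀ t : ℝ, HasDerivAt φ
      (⟪f' (z + t • v), v⟫_ℝ - ⟪f' z, v⟫_ℝ - L * t * ‖v‖ ^ 2) t := by
    intro t
    have h1 := cdca_line_hasDerivAt f f' hf z v t
    have h2 : HasDerivAt (fun s : ℝ => s * ⟪f' z, v⟫_ℝ) ⟪f' z, v⟫_ℝ t := by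
      simpa using (hasDerivAt_id t).mul_const ⟪f' z, v⟫_ℝ
    have h3 : HasDerivAt (fun s : ℝ => L / 2 * s ^ 2 * ‖v‖ ^ 2) (L * t * ‖v‖ ^ 2) t := by
      have hsq : HasDerivAt (fun s : ℝ => s ^ 2) (2 * t) t := by
        simpa using (hasDerivAt_pow 2 t)
      have := (hsq.const_mul (L / 2)).mul_const (‖v‖ ^ 2)
      rw [show L * t * ‖v‖ ^ 2 = L / 2 * (2 * t) * ‖v‖ ^ 2 by ring]
      exact this
    have := (h1.sub h2).sub h3
    exact this
  have hanti : AntitoneOn φ (Icc 0 1) := by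
    apply antitoneOn_of_deriv_nonpos (convex_Icc 0 1)
    · have hdiff : Differentiable ℝ φ := fun t => (hd t).differentiableAt
      exact hdiff.continuous.continuousOn
    · intro t ht
      exact ((hd t).differentiableAt).differentiableWithinAt
    · intro t ht
      rw [interior_Icc] at ht
      rw [(hd t).deriv]
      have hcs : ⟪f' (z + t • v) - f' z, v⟫_ℝ ≤ ‖f' (z + t • v) - f' z‖ * ‖v‖ :=
        real_inner_le_norm _ _
      have hlp : ‖f' (z + t • v) - f' z‖ ≤ L * (t * ‖v‖) := by
        have := hlip (z + t • v) z
        simpa [norm_smul, abs_of_pos ht.1, mul_assoc] using this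
      have hip : ⟪f' (z + t • v) - f' z, v⟫_ℝ = ⟪f' (z + t • v), v⟫_ℝ - ⟪f' z, v⟫_ℝ :=
        inner_sub_left _ _ _
      nlinarith [norm_nonneg v, ht.1]
  have h01 := hanti (by constructor <;> norm_num : (0:ℝ) ∈ Icc (0:ℝ) 1)
    (by constructor <;> norm_num : (1:ℝ) ∈ Icc (0:ℝ) 1) zero_le_one
  simp only [hφ, zero_smul, add_zero, one_smul] at h01
  have hzw : z + v = w := by rw [hv]; abel
  rw [hzw] at h01
  nlinarith [h01]

lemma cdca_coco (f : E → ℝ) (f' : E → E) (L : ℝ) (hL : 0 < L)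
    (hconv : ConvexOn ℝ Set.univ f)
    (hf : ∀ z, HasGradientAt f (f' z) z)
    (hlip : ∀ z w, ‖f' z - f' w‖ ≤ L * ‖z - w‖) (z w : E) :
    f z + ⟪f' z, w - z⟫_ℝ + 1 / (2 * L) * ‖f' w - f' z‖ ^ 2 ≤ f w := by
  set Δ := f' w - f' z with hΔ
  set m := w - (1 / L) • Δ with hm
  have h1 := cdca_grad_convex f f' hconv hf z m
  have h2 := cdca_descent f f' L hf hlip w m
  have e1 : ⟪f' z, m - z⟫_ℝ = ⟪f' z, w - z⟫_ℝ - (1 / L) * ⟪f' z, Δ⟫_ℝ := by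
    rw [hm, show w - (1 / L) • Δ - z = (w - z) - (1/L) • Δ by abel]
    rw [inner_sub_right, real_inner_smul_right]
  have e2 : ⟪f' w, m - w⟫_ℝ = -(1 / L) * ⟪f' w, Δ⟫_ℝ := by
    rw [hm, show w - (1 / L) • Δ - w = -((1/L) • Δ) by abel]
    rw [inner_neg_right, real_inner_smul_right]; ring
  have e3 : ‖m - w‖ ^ 2 = (1 / L) ^ 2 * ‖Δ‖ ^ 2 := by
    rw [hm, show w - (1 / L) • Δ - w = -((1/L) • Δ) by abel]
    rw [norm_neg, norm_smul]
    simp [abs_of_pos (by positivity : (0:ℝ) < 1/L), mul_pow]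
  rw [e1] at h1
  rw [e2, e3] at h2
  have hLne : (L:ℝ) ≠ 0 := ne_of_gt hL
  have e4 : ⟪f' w, Δ⟫_ℝ - ⟪f' z, Δ⟫_ℝ = ‖Δ‖ ^ 2 := by
    rw [← inner_sub_left, ← hΔ, real_inner_self_eq_norm_sq]
  have e5 : L / 2 * ((1 / L) ^ 2 * ‖Δ‖ ^ 2) = 1 / (2 * L) * ‖Δ‖ ^ 2 := by
    field_simp
  have e6 : (1 / L) * ⟪f' w, Δ⟫_ℝ = (1 / L) * ⟪f' z, Δ⟫_ℝ + (1 / L) * ‖Δ‖ ^ 2 := by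
    rw [← e4]; ring
  have e7 : (1 / L) * ‖Δ‖ ^ 2 = 2 * (1 / (2 * L) * ‖Δ‖ ^ 2) := by
    field_simp
  linarith [h1, h2, e5, e6, e7]

lemma cdca_tlim {A B C : ℝ} (hC : 0 ≤ C) (h : ∀ t : ℝ, 0 < t → t ≤ 1 → A ≤ B + t * C) :
    A ≤ B := by
  by_contra hc
  push_neg at hc
  have hpos : 0 < (A - B) / (2 * (C + 1)) := by
    apply div_pos (by linarith) (by linarith)
  have ht0 : 0 < min 1 ((A - B) / (2 * (C + 1))) := lt_min zero_lt_one hpos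
  have ht1 : min 1 ((A - B) / (2 * (C + 1))) ≤ 1 := min_le_left _ _
  have ht2 : min 1 ((A - B) / (2 * (C + 1))) ≤ (A - B) / (2 * (C + 1)) := min_le_right _ _
  have hkey := h _ ht0 ht1
  have hP : (A - B) / (2 * (C + 1)) * C ≤ (A - B) / 2 := by
    rw [div_mul_eq_mul_div, div_le_div_iff₀ (by linarith) (by norm_num)]
    nlinarith
  have := mul_le_mul_of_nonneg_right ht2 hC
  linarith

lemma cdca_ereal_step {x y : EReal} {rx ry : ℝ} (hxb : x ≠ ⊥) (hyt : y ≠ ⊤) (hyb : y ≠ ⊥)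
    (h : x + (rx : EReal) ≤ y + (ry : EReal)) :
    x ≠ ⊤ ∧ x.toReal + rx ≤ y.toReal + ry := by
  have hy : y = ((y.toReal : ℝ) : EReal) := (EReal.coe_toReal hyt hyb).symm
  rw [hy, ← EReal.coe_add] at h
  have hxt : x ≠ ⊤ := by
    intro hT
    rw [hT, EReal.top_add_coe] at h
    exact EReal.coe_ne_top _ (top_le_iff.mp h)
  have hx : x = ((x.toReal : ℝ) : EReal) := (EReal.coe_toReal hxt hxb).symm
  rw [hx, ← EReal.coe_add] at h
  exact ⟨hxt, EReal.coe_le_coe_iff.mp h⟩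

end Aux

lemma cdca_scalar_main (L lam delta tau : ℝ) (hL : 0 < L) (hlam : 0 < lam)
    (htau : tau = L ^ 2 * delta ^ 2 / (8 * lam))
    (fp fu fy hp hu gp gu aa bb dd gg ab da db dg fa fb ea D2 : ℝ)
    (H1 : gp ≤ gu + L / 2 * ab - lam * aa - fa + ea)
    (H2 : hu + ea ≤ hp)
    (H3 : fp + (-da - fa) + 1 / (2 * L) * (dd + 2 * dg + gg) ≤ fu)
    (H4 : fp + (db + fb) + 1 / (2 * L) * dd ≤ fy)
    (H5 : fy + (-fa - fb) + 1 / (2 * L) * gg ≤ fu)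
    (H6 : bb ≤ delta ^ 2 * D2)
    (hq1 : 0 ≤ (2 * lam / (2 * lam + L)) ^ 2 * dd
        + 2 * (2 * lam / (2 * lam + L) * dg) + gg)
    (hq2 : 0 ≤ ((4 * lam + L) / (2 * lam + L) ^ 2) ^ 2 * dd
        - 2 * ((4 * lam + L) / (2 * lam + L) ^ 2
            * (2 * lam / (2 * lam + L) * da - L / (2 * lam + L) * db))
        + ((2 * lam / (2 * lam + L)) ^ 2 * aa
            - 2 * (2 * lam / (2 * lam + L) * (L / (2 * lam + L) * ab))
            + (L / (2 * lam + L)) ^ 2 * bb))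
    (hq3 : 0 ≤ aa - 2 * (L / (2 * lam) * ab) + (L / (2 * lam)) ^ 2 * bb) :
    fp - hp + gp + tau * aa + (lam / 2 - tau) * aa ≤ fu - hu + gu + tau * D2 := by
  have hk : (0:ℝ) < 2 * lam + L := by linarith
  have h4 : (0:ℝ) < 4 * lam + L := by linarith
  have key : (fu - hu + gu + tau * D2) - (fp - hp + gp + tau * aa + (lam / 2 - tau) * aa)
      = 2 * lam / (2 * lam + L)
          * (fu - (fp + (-da - fa) + 1 / (2 * L) * (dd + 2 * dg + gg)))
        + L / (2 * lam + L) * (fy - (fp + (db + fb) + 1 / (2 * L) * dd))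
        + L / (2 * lam + L) * (fu - (fy + (-fa - fb) + 1 / (2 * L) * gg))
        + (gu + L / 2 * ab - lam * aa - fa + ea - gp)
        + (hp - (hu + ea))
        + L ^ 2 / (8 * lam) * (delta ^ 2 * D2 - bb)
        + 1 / (2 * L) * ((2 * lam / (2 * lam + L)) ^ 2 * dd
            + 2 * (2 * lam / (2 * lam + L) * dg) + gg)
        + (2 * lam + L) ^ 2 / (2 * (4 * lam + L))
            * (((4 * lam + L) / (2 * lam + L) ^ 2) ^ 2 * dd
              - 2 * ((4 * lam + L) / (2 * lam + L) ^ 2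
                  * (2 * lam / (2 * lam + L) * da - L / (2 * lam + L) * db))
              + ((2 * lam / (2 * lam + L)) ^ 2 * aa
                  - 2 * (2 * lam / (2 * lam + L) * (L / (2 * lam + L) * ab))
                  + (L / (2 * lam + L)) ^ 2 * bb))
        + lam * L / (2 * (4 * lam + L))
            * (aa - 2 * (L / (2 * lam) * ab) + (L / (2 * lam)) ^ 2 * bb) := by
    subst htau
    field_simp
    ring
  have P1 : 0 ≤ 2 * lam / (2 * lam + L)
      * (fu - (fp + (-da - fa) + 1 / (2 * L) * (dd + 2 * dg + gg))) :=
    mul_nonneg (by positivity) (by linarith)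
  have P2 : 0 ≤ L / (2 * lam + L) * (fy - (fp + (db + fb) + 1 / (2 * L) * dd)) :=
    mul_nonneg (by positivity) (by linarith)
  have P3 : 0 ≤ L / (2 * lam + L) * (fu - (fy + (-fa - fb) + 1 / (2 * L) * gg)) :=
    mul_nonneg (by positivity) (by linarith)
  have P4 : 0 ≤ gu + L / 2 * ab - lam * aa - fa + ea - gp := by linarith
  have P5 : 0 ≤ hp - (hu + ea) := by linarith
  have P6 : 0 ≤ L ^ 2 / (8 * lam) * (delta ^ 2 * D2 - bb) :=
    mul_nonneg (by positivity) (by linarith)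
  have P7 : 0 ≤ 1 / (2 * L) * ((2 * lam / (2 * lam + L)) ^ 2 * dd
      + 2 * (2 * lam / (2 * lam + L) * dg) + gg) :=
    mul_nonneg (by positivity) hq1
  have P8 : 0 ≤ (2 * lam + L) ^ 2 / (2 * (4 * lam + L))
      * (((4 * lam + L) / (2 * lam + L) ^ 2) ^ 2 * dd
        - 2 * ((4 * lam + L) / (2 * lam + L) ^ 2
            * (2 * lam / (2 * lam + L) * da - L / (2 * lam + L) * db))
        + ((2 * lam / (2 * lam + L)) ^ 2 * aa
            - 2 * (2 * lam / (2 * lam + L) * (L / (2 * lam + L) * ab))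
            + (L / (2 * lam + L)) ^ 2 * bb)) :=
    mul_nonneg (by positivity) hq2
  have P9 : 0 ≤ lam * L / (2 * (4 * lam + L))
      * (aa - 2 * (L / (2 * lam) * ab) + (L / (2 * lam)) ^ 2 * bb) :=
    mul_nonneg (by positivity) hq3
  linarith [key, P1, P2, P3, P4, P5, P6, P7, P8, P9]


/-- For a cDCA sequence with `x⁰ ∈ dom g`, for every `k ≥ 0`,
`E(x^{k+1}, x^k) + (λ/2 - τ)‖x^k - x^{k+1}‖² ≤ E(x^k, x^{k-1})`; in particular, since
`τ = L_f²δ²/(8λ) < λ/2`, the sequence `(E(x^k, x^{k-1}))_{k ≥ 0}` is nonincreasing.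
(Here `x 0 = x⁻¹`, `x (k+1) = xᵏ`, and `E(a, b) = F(a) + τ‖a - b‖²`.) -/
theorem stmt5 {n : ℕ}
    (f : Euc n → ℝ) (f' : Euc n → Euc n) (Lf : ℝ) (hLf : 0 < Lf)
    (hfconv : ConvexOn ℝ Set.univ f)
    (hfgrad : ∀ z, HasGradientAt f (f' z) z)
    (hflip : ∀ z w, ‖f' z - f' w‖ ≤ Lf * ‖z - w‖)
    (g : Euc n → EReal) (hgproper : ProperE g) (hgconv : ConvexEReal g)
    (hglsc : LowerSemicontinuous g)
    (h : Euc n → ℝ) (hhconv : ConvexOn ℝ Set.univ h)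
    (F : Euc n → EReal) (hF : ∀ z, F z = ((f z - h z : ℝ) : EReal) + g z)
    (P : ℝ → Euc n → Euc n) (hP : IsProx g P)
    (lam δ mu tau : ℝ) (hlam : 0 < lam) (hδ : δ ∈ Set.Ioo 0 (2*lam/Lf))
    (hmu : mu = 2/(2*lam + Lf)) (htau : tau = Lf^2 * δ^2 / (8*lam))
    (EE : Euc n → Euc n → EReal) (hEE : ∀ a b, EE a b = F a + ((tau * ‖a - b‖^2 : ℝ) : EReal))
    (x : ℕ → Euc n) (hx : IsCDCA f' h P lam mu δ x) (hx0 : g (x 1) ≠ ⊤) :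
    tau < lam/2 ∧
      (∀ k : ℕ,
        EE (x (k+2)) (x (k+1)) + (((lam/2 - tau) * ‖x (k+1) - x (k+2)‖^2 : ℝ) : EReal) ≤
          EE (x (k+1)) (x k)) ∧
      (∀ k : ℕ, EE (x (k+2)) (x (k+1)) ≤ EE (x (k+1)) (x k)) := by
  have hgbot := hgproper.1
  have hk0 : (0:ℝ) < 2*lam + Lf := by linarith
  have hkne : (2*lam + Lf) ≠ 0 := ne_of_gt hk0
  have hmupos : 0 < mu := by rw [hmu]; positivity
  have hmune : mu ≠ 0 := ne_of_gt hmupos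
  obtain ⟨hδ0, hδ2⟩ := hδ
  have hδL : Lf * δ < 2*lam := by
    rw [lt_div_iff₀ hLf] at hδ2; linarith
  have htauhalf : tau < lam/2 := by
    rw [htau, div_lt_iff₀ (by linarith : (0:ℝ) < 8*lam)]
    nlinarith [mul_pos hLf hδ0]
  -- finiteness of g along the sequence
  have hfin : ∀ k : ℕ, g (x (k+1)) ≠ ⊤ := by
    intro k
    induction k with
    | zero => exact hx0
    | succ m ih =>
      obtain ⟨η, hη, y, hupd, hclose⟩ := hx m
      have hprox := (hP mu hmupos _ (x (m+2))).mp hupd.symm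
      exact (cdca_ereal_step (hgbot _) ih (hgbot _) (hprox (x (m+1)))).1
  -- main real inequality
  have main : ∀ k : ℕ,
      f (x (k+2)) - h (x (k+2)) + (g (x (k+2))).toReal + tau * ‖x (k+2) - x (k+1)‖^2
          + (lam/2 - tau) * ‖x (k+1) - x (k+2)‖^2
        ≤ f (x (k+1)) - h (x (k+1)) + (g (x (k+1))).toReal + tau * ‖x (k+1) - x k‖^2 := by
    intro k
    obtain ⟨η, hη, y, hupd, hclose⟩ := hx k
    set v := x k with hv'
    set u := x (k+1) with hu'
    set p := x (k+2) with hp'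
    set w := (1 - mu*lam) • y - mu • f' y + (mu*lam) • u + mu • η with hw
    have hprox := (hP mu hmupos w p).mp hupd.symm
    have hgut : g u ≠ ⊤ := hfin k
    have hgpt : g p ≠ ⊤ := hfin (k+1)
    set grp := (g p).toReal with hgrp
    set gru := (g u).toReal with hgru
    have hgpe : g p = ((grp : ℝ) : EReal) := (EReal.coe_toReal hgpt (hgbot p)).symm
    have hgue : g u = ((gru : ℝ) : EReal) := (EReal.coe_toReal hgut (hgbot u)).symm
    -- prox subgradient inequality (limit argument)
    have Hglim : ∀ t : ℝ, 0 < t → t ≤ 1 →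
        grp ≤ gru - 1/mu * ⟪w - p, u - p⟫_ℝ + t * (1/(2*mu) * ‖u - p‖^2) := by
      intro t ht0 ht1
      have hz := hprox ((1 - t) • p + t • u)
      have hcv := hgconv p u (1 - t) t (by linarith) (le_of_lt ht0) (by ring)
      rw [hgpe, hgue, ← EReal.coe_mul, ← EReal.coe_mul, ← EReal.coe_add] at hcv
      have hchain := le_trans hz (add_le_add_left hcv
        ((1/(2*mu) * ‖w - ((1 - t) • p + t • u)‖^2 : ℝ) : EReal))
      rw [hgpe, ← EReal.coe_add, ← EReal.coe_add] at hchain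
      have hre := EReal.coe_le_coe_iff.mp hchain
      have hid : w - ((1 - t) • p + t • u) = (w - p) - t • (u - p) := by module
      have hnrm : ‖(w - p) - t • (u - p)‖^2
          = ‖w - p‖^2 - 2*(t*⟪w - p, u - p⟫_ℝ) + t^2*‖u - p‖^2 := by
        rw [norm_sub_sq_real, real_inner_smul_right, norm_smul, Real.norm_eq_abs,
          abs_of_pos ht0, mul_pow]
      rw [hid, hnrm] at hre
      refine le_of_mul_le_mul_left ?_ ht0
      have hexp : t * (gru - 1/mu * ⟪w - p, u - p⟫_ℝ + t * (1/(2*mu) * ‖u - p‖^2))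
          = t*gru - 1/(2*mu)*(2*(t*⟪w - p, u - p⟫_ℝ)) + 1/(2*mu)*(t^2*‖u - p‖^2) := by
        field_simp
      rw [hexp]
      nlinarith [hre]
    have h2mu : (0:ℝ) < 2*mu := by linarith
    have hC : (0:ℝ) ≤ 1/(2*mu) * ‖u - p‖^2 :=
      mul_nonneg (le_of_lt (one_div_pos.mpr h2mu)) (sq_nonneg _)
    have H1base : grp ≤ gru - 1/mu * ⟪w - p, u - p⟫_ℝ := cdca_tlim hC Hglim
    have hinner : ⟪w - p, u - p⟫_ℝ
        = -((1 - mu*lam) * ⟪y - p, p - u⟫_ℝ - mu*lam * ‖p - u‖^2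
            - mu * ⟪f' y, p - u⟫_ℝ + mu * ⟪η, p - u⟫_ℝ) := by
      rw [show w - p = (1 - mu*lam) • (y - p) - (mu*lam) • (p - u) - mu • (f' y) + mu • η
            from by rw [hw]; module,
          show u - p = -(p - u) from by abel,
          inner_neg_right, inner_add_left, inner_sub_left, inner_sub_left,
          real_inner_smul_left, real_inner_smul_left, real_inner_smul_left,
          real_inner_smul_left, real_inner_self_eq_norm_sq]
      try ring
    have hmu1 : 1/mu * -((1 - mu*lam) * ⟪y - p, p - u⟫_ℝ - mu*lam * ‖p - u‖^2
            - mu * ⟪f' y, p - u⟫_ℝ + mu * ⟪η, p - u⟫_ℝ)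
        = -(Lf/2 * ⟪p - u, y - p⟫_ℝ - lam * ‖p - u‖^2
            - ⟪f' y, p - u⟫_ℝ + ⟪η, p - u⟫_ℝ) := by
      rw [real_inner_comm (y - p) (p - u), hmu]
      field_simp
      try ring
    have H1 : grp ≤ gru + Lf/2 * ⟪p - u, y - p⟫_ℝ - lam * ‖p - u‖^2
        - ⟪f' y, p - u⟫_ℝ + ⟪η, p - u⟫_ℝ := by
      rw [hinner, hmu1] at H1base
      linarith [H1base]
    -- h subgradient
    have H2 : h u + ⟪η, p - u⟫_ℝ ≤ h p := hη p
    -- f chains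
    have c3 := cdca_coco f f' Lf hLf hfconv hfgrad hflip p u
    have i3 : ⟪f' p, u - p⟫_ℝ = -⟪f' p - f' y, p - u⟫_ℝ - ⟪f' y, p - u⟫_ℝ := by
      rw [show u - p = -(p - u) from by abel, inner_neg_right, inner_sub_left]; ring
    have n3 : ‖f' u - f' p‖^2 = ‖f' p - f' y‖^2
        + 2*⟪f' p - f' y, f' y - f' u⟫_ℝ + ‖f' y - f' u‖^2 := by
      rw [show f' u - f' p = -((f' p - f' y) + (f' y - f' u)) from by abel,
        norm_neg, norm_add_sq_real]
    rw [i3, n3] at c3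
    have c4 := cdca_coco f f' Lf hLf hfconv hfgrad hflip p y
    have i4 : ⟪f' p, y - p⟫_ℝ = ⟪f' p - f' y, y - p⟫_ℝ + ⟪f' y, y - p⟫_ℝ := by
      rw [inner_sub_left]; ring
    have n4 : ‖f' y - f' p‖^2 = ‖f' p - f' y‖^2 := by rw [norm_sub_rev]
    rw [i4, n4] at c4
    have c5 := cdca_coco f f' Lf hLf hfconv hfgrad hflip y u
    have i5 : ⟪f' y, u - y⟫_ℝ = -⟪f' y, p - u⟫_ℝ - ⟪f' y, y - p⟫_ℝ := by
      rw [show u - y = -((p - u) + (y - p)) from by abel, inner_neg_right, inner_add_right]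
      ring
    have n5 : ‖f' u - f' y‖^2 = ‖f' y - f' u‖^2 := by rw [norm_sub_rev]
    rw [i5, n5] at c5
    -- inexactness bound
    have H6 : ‖y - p‖^2 ≤ δ^2 * ‖v - u‖^2 := by
      have h1 : ‖y - p‖ ≤ δ * ‖v - u‖ := by rw [norm_sub_rev]; exact hclose
      have h2 := pow_le_pow_left₀ (norm_nonneg (y - p)) h1 2
      rw [mul_pow] at h2
      exact h2
    -- the three squares
    have hq1 : 0 ≤ (2*lam/(2*lam+Lf))^2 * ‖f' p - f' y‖^2
        + 2*(2*lam/(2*lam+Lf) * ⟪f' p - f' y, f' y - f' u⟫_ℝ) + ‖f' y - f' u‖^2 := by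
      have e : (0:ℝ) ≤ ‖(2*lam/(2*lam+Lf)) • (f' p - f' y) + (f' y - f' u)‖^2 := sq_nonneg _
      rw [norm_add_sq_real, norm_smul, Real.norm_eq_abs, mul_pow, sq_abs,
        real_inner_smul_left] at e
      linarith [e]
    have hq2 : 0 ≤ ((4*lam+Lf)/(2*lam+Lf)^2)^2 * ‖f' p - f' y‖^2
        - 2*((4*lam+Lf)/(2*lam+Lf)^2
            * (2*lam/(2*lam+Lf) * ⟪f' p - f' y, p - u⟫_ℝ
              - Lf/(2*lam+Lf) * ⟪f' p - f' y, y - p⟫_ℝ))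
        + ((2*lam/(2*lam+Lf))^2 * ‖p - u‖^2
            - 2*(2*lam/(2*lam+Lf) * (Lf/(2*lam+Lf) * ⟪p - u, y - p⟫_ℝ))
            + (Lf/(2*lam+Lf))^2 * ‖y - p‖^2) := by
      have e : (0:ℝ) ≤ ‖((4*lam+Lf)/(2*lam+Lf)^2) • (f' p - f' y)
          - ((2*lam/(2*lam+Lf)) • (p - u) - (Lf/(2*lam+Lf)) • (y - p))‖^2 := sq_nonneg _
      rw [norm_sub_sq_real, real_inner_smul_left, inner_sub_right,
        real_inner_smul_right, real_inner_smul_right,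
        norm_sub_sq_real ((2*lam/(2*lam+Lf)) • (p - u)) ((Lf/(2*lam+Lf)) • (y - p)),
        real_inner_smul_left, real_inner_smul_right,
        norm_smul, Real.norm_eq_abs, mul_pow, sq_abs,
        norm_smul, Real.norm_eq_abs, mul_pow, sq_abs,
        norm_smul, Real.norm_eq_abs, mul_pow, sq_abs] at e
      linarith [e]
    have hq3 : 0 ≤ ‖p - u‖^2 - 2*(Lf/(2*lam) * ⟪p - u, y - p⟫_ℝ)
        + (Lf/(2*lam))^2 * ‖y - p‖^2 := by
      have e : (0:ℝ) ≤ ‖(p - u) - (Lf/(2*lam)) • (y - p)‖^2 := sq_nonneg _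
      rw [norm_sub_sq_real, real_inner_smul_right, norm_smul, Real.norm_eq_abs,
        mul_pow, sq_abs] at e
      linarith [e]
    -- assemble
    rw [show ‖u - p‖^2 = ‖p - u‖^2 from by rw [norm_sub_rev],
        show ‖u - v‖^2 = ‖v - u‖^2 from by rw [norm_sub_rev]]
    exact cdca_scalar_main Lf lam δ tau hLf hlam htau
      (f p) (f u) (f y) (h p) (h u) grp gru
      (‖p - u‖^2) (‖y - p‖^2) (‖f' p - f' y‖^2) (‖f' y - f' u‖^2)
      (⟪p - u, y - p⟫_ℝ) (⟪f' p - f' y, p - u⟫_ℝ) (⟪f' p - f' y, y - p⟫_ℝ)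
      (⟪f' p - f' y, f' y - f' u⟫_ℝ) (⟪f' y, p - u⟫_ℝ) (⟪f' y, y - p⟫_ℝ)
      (⟪η, p - u⟫_ℝ) (‖v - u‖^2)
      H1 H2 c3 c4 c5 H6 hq1 hq2 hq3
  -- EReal versions
  have hEEeq : ∀ k : ℕ, EE (x (k+1)) (x k)
      = ((f (x (k+1)) - h (x (k+1)) + (g (x (k+1))).toReal
          + tau * ‖x (k+1) - x k‖^2 : ℝ) : EReal) := by
    intro k
    rw [hEE, hF]
    conv_lhs => rw [show g (x (k+1)) = (((g (x (k+1))).toReal : ℝ) : EReal)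
        from (EReal.coe_toReal (hfin k) (hgbot _)).symm]
    rw [← EReal.coe_add, ← EReal.coe_add]
  have part2 : ∀ k : ℕ,
      EE (x (k+2)) (x (k+1)) + (((lam/2 - tau) * ‖x (k+1) - x (k+2)‖^2 : ℝ) : EReal) ≤
        EE (x (k+1)) (x k) := by
    intro k
    rw [hEEeq (k+1), hEEeq k, ← EReal.coe_add]
    exact EReal.coe_le_coe_iff.mpr (main k)
  refine ⟨htauhalf, part2, ?_⟩
  intro k
  have hone : EE (x (k+2)) (x (k+1)) ≤ EE (x (k+2)) (x (k+1))
      + (((lam/2 - tau) * ‖x (k+1) - x (k+2)‖^2 : ℝ) : EReal) := by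
    apply le_add_of_nonneg_right
    have : (0:ℝ) ≤ (lam/2 - tau) * ‖x (k+1) - x (k+2)‖^2 :=
      mul_nonneg (by linarith) (sq_nonneg _)
    exact_mod_cast this
  exact le_trans hone (part2 k)
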